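/- Assume that for every i ∈ 𝐈 there exist constants ρ^i > 0 and X*_i > x*_i such that h_i(x) = ρ^i · (x − x*_i)⁺ for all x < X*_i (i.e., each h_i is linear in a neighbourhood of x*_i). Then there exists T > 0 such that the mapping F is nondecreasing on [0,T): for all 0 ≤ t ≤ t̃ < T and all i ∈ 𝐈, F_i(t) ≤ F_i(t̃). -/

import Mathlib

/-- The set of indices at which `a` attains its minimum. -/
noncomputable def argminSet {n : ℕ} (a : Fin n → ℝ) : Finset (Fin n) :=
  Finset.univ.filter (fun i => ∀ j, a i ≤ a j)

/-- The minimum entry of `a`. -/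
noncomputable def minval {n : ℕ} (a : Fin n → ℝ) : ℝ := ⨅ i, a i

/-- The restriction of `a` to the indices in `S`, reindexed by `Fin S.card`
in increasing order. -/
noncomputable def restrictVec {n : ℕ} (S : Finset (Fin n)) (a : Fin n → ℝ) :
    Fin S.card → ℝ :=
  fun i => a (S.orderIsoOfFin rfl i).1

/-- The "min-sensitive" partial order `⪕` on `ℝⁿ` (Definition 1 of the paper):
for `n = 1` it is the usual order; for `n ≥ 2`, `a ⪕ b` iff (i) `a = b`, or
(ii) `min a < min b`, or (iii) `min a = min b` and `Argmin b ⊊ Argmin a`, or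
(iv) `min a = min b`, `Argmin a = Argmin b ⊊ {1,...,n}` and the restrictions
of `a` and `b` to the complement of the common argmin set are related. -/
noncomputable def msLE : (n : ℕ) → (Fin n → ℝ) → (Fin n → ℝ) → Prop
  | 0, _, _ => True
  | 1, a, b => a 0 ≤ b 0
  | n + 2, a, b =>
    a = b ∨
    minval a < minval b ∨
    (minval a = minval b ∧ argminSet b ⊂ argminSet a) ∨
    (minval a = minval b ∧ argminSet a = argminSet b ∧ argminSet a ⊂ Finset.univ ∧
      msLE ((argminSet a)ᶜ).card (restrictVec (argminSet a)ᶜ a) (restrictVec (argminSet a)ᶜ b))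
termination_by n => n
decreasing_by
  have hne : (argminSet a).Nonempty := by
    obtain ⟨i, -, hi⟩ := Finset.exists_min_image Finset.univ a ⟨0, Finset.mem_univ 0⟩
    refine ⟨i, ?_⟩
    unfold argminSet
    exact Finset.mem_filter.mpr ⟨Finset.mem_univ i, fun j => hi j (Finset.mem_univ j)⟩
  have h1 : 0 < (argminSet a).card := Finset.card_pos.mpr hne
  have h2 : ((argminSet a)ᶜ).card = Fintype.card (Fin (n + 2)) - (argminSet a).card :=
    Finset.card_compl _
  simp only [Fintype.card_fin] at h2
  omega

/-- `x*_i`: the supremum of the zero set of a function. -/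
noncomputable def xstar (f : ℝ → ℝ) : ℝ := sSup {x | f x = 0}

/-- The admissible set `A_t`. -/
def admissible (I J : ℕ) (h : Fin I → ℝ → ℝ) (G : Fin J → Finset (Fin I)) (t : ℝ) :
    Set (Fin I → ℝ) :=
  {a | (∀ i, a i ≤ t) ∧ ∀ j, (∑ i ∈ G j, h i (a i)) ≤ t}

/-- `F` is the `⪕`-greatest element of `A_t`. -/
def IsGreatestMS (I J : ℕ) (h : Fin I → ℝ → ℝ) (G : Fin J → Finset (Fin I)) (t : ℝ)
    (F : Fin I → ℝ) : Prop :=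
  F ∈ admissible I J h G t ∧ ∀ a ∈ admissible I J h G t, msLE I a F


section Toolkit

lemma minval_le {n : ℕ} (a : Fin n → ℝ) (i : Fin n) : minval a ≤ a i :=
  ciInf_le (Set.finite_range a).bddBelow i

lemma le_minval {n : ℕ} [Nonempty (Fin n)] (a : Fin n → ℝ) (c : ℝ) (h : ∀ i, c ≤ a i) :
    c ≤ minval a := le_ciInf h

lemma mem_argminSet {n : ℕ} {a : Fin n → ℝ} {i : Fin n} :
    i ∈ argminSet a ↔ ∀ j, a i ≤ a j := by
  unfold argminSet
  simp

lemma argminSet_nonempty {n : ℕ} (hn : 0 < n) (a : Fin n → ℝ) : (argminSet a).Nonempty := by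
  obtain ⟨i, -, hi⟩ := Finset.exists_min_image Finset.univ a ⟨⟨0, hn⟩, Finset.mem_univ _⟩
  exact ⟨i, mem_argminSet.mpr fun j => hi j (Finset.mem_univ j)⟩

lemma argmin_eq_minval {n : ℕ} {a : Fin n → ℝ} {i : Fin n} (hi : i ∈ argminSet a) :
    a i = minval a := by
  haveI : Nonempty (Fin n) := ⟨i⟩
  exact le_antisymm (le_minval a _ (mem_argminSet.mp hi)) (minval_le a i)

lemma minval_mem {n : ℕ} (hn : 0 < n) (a : Fin n → ℝ) : ∃ i ∈ argminSet a, a i = minval a := by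
  obtain ⟨i, hi⟩ := argminSet_nonempty hn a
  exact ⟨i, hi, argmin_eq_minval hi⟩

lemma mem_argminSet_of_eq {n : ℕ} {a : Fin n → ℝ} {i : Fin n} (h : a i = minval a) :
    i ∈ argminSet a := mem_argminSet.mpr fun j => h ▸ minval_le a j

/-- `min a ≤ min b` iff some coordinate of `a` is below all coordinates of `b`. -/
lemma minval_le_minval_iff {n : ℕ} (hn : 0 < n) (a b : Fin n → ℝ) :
    minval a ≤ minval b ↔ ∃ i, ∀ j, a i ≤ b j := by
  constructor
  · intro hle
    obtain ⟨i, -, hi⟩ := minval_mem hn a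
    exact ⟨i, fun j => le_trans (hi ▸ hle) (minval_le b j)⟩
  · rintro ⟨i, hi⟩
    haveI : Nonempty (Fin n) := ⟨i⟩
    exact le_trans (minval_le a i) (le_minval b _ hi)

lemma restrictVec_apply {n : ℕ} (S : Finset (Fin n)) (a : Fin n → ℝ) (i : Fin S.card) :
    restrictVec S a i = a (S.orderIsoOfFin rfl i).1 := rfl

lemma restrictVec_surj {n : ℕ} (S : Finset (Fin n)) {k : Fin n} (hk : k ∈ S) :
    ∃ i : Fin S.card, (S.orderIsoOfFin rfl i).1 = k := by
  obtain ⟨i, hi⟩ := (S.orderIsoOfFin rfl).surjective ⟨k, hk⟩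
  exact ⟨i, by rw [hi]⟩

lemma compl_card_lt {n : ℕ} {a : Fin (n+2) → ℝ} :
    ((argminSet a)ᶜ.card) < n + 2 := by
  have hne := argminSet_nonempty (by omega) a
  have h1 : 0 < (argminSet a).card := Finset.card_pos.mpr hne
  have h2 : ((argminSet a)ᶜ).card = Fintype.card (Fin (n + 2)) - (argminSet a).card :=
    Finset.card_compl _
  simp only [Fintype.card_fin] at h2
  omega

/-- Pointwise domination implies `⪕`. -/
lemma msLE_of_le : ∀ (n : ℕ) (a b : Fin n → ℝ), (∀ i, a i ≤ b i) → msLE n a b := by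
  intro n
  induction n using Nat.strong_induction_on with
  | _ n IH =>
    match n with
    | 0 => intro a b _; rw [msLE.eq_1]; trivial
    | 1 => intro a b hab; rw [msLE.eq_2]; exact hab 0
    | (m+2) =>
      intro a b hab
      rw [msLE.eq_3]
      by_cases heq : a = b
      · exact Or.inl heq
      have hminle : minval a ≤ minval b := by
        obtain ⟨i, -, hi⟩ := minval_mem (by omega) b
        exact hi ▸ le_trans (minval_le a i) (hab i)
      rcases lt_or_eq_of_le hminle with hlt | hmeq
      · exact Or.inr (Or.inl hlt)
      have hsub : argminSet b ⊆ argminSet a := by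
        intro i hi
        have : a i = minval a := le_antisymm
          (by rw [hmeq, ← argmin_eq_minval hi]; exact hab i) (minval_le a i)
        exact mem_argminSet_of_eq this
      by_cases hproper : argminSet b ⊂ argminSet a
      · exact Or.inr (Or.inr (Or.inl ⟨hmeq, hproper⟩))
      have hset : argminSet b = argminSet a := by
        by_contra hne
        exact hproper (ssubset_of_subset_of_ne hsub hne)
      by_cases huniv : argminSet a = Finset.univ
      · exfalso; apply heq; funext i
        have hia : i ∈ argminSet a := huniv ▸ Finset.mem_univ i
        have hib : i ∈ argminSet b := hset ▸ hia
        rw [argmin_eq_minval hia, argmin_eq_minval hib, hmeq]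
      · refine Or.inr (Or.inr (Or.inr ⟨hmeq, hset.symm, ?_, ?_⟩))
        · exact Finset.ssubset_iff_subset_ne.mpr ⟨Finset.subset_univ _, huniv⟩
        · exact IH _ compl_card_lt _ _ (fun i => hab _)

/-- `⪕` is antisymmetric. -/
lemma msLE_antisymm : ∀ (n : ℕ) (a b : Fin n → ℝ), msLE n a b → msLE n b a → a = b := by
  intro n
  induction n using Nat.strong_induction_on with
  | _ n IH =>
    match n with
    | 0 => intro a b _ _; funext i; exact i.elim0
    | 1 =>
      intro a b h1 h2; rw [msLE.eq_2] at h1 h2; funext i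
      have : i = 0 := Subsingleton.elim _ _
      rw [this]; linarith
    | m+2 =>
      intro a b h1 h2
      rw [msLE.eq_3] at h1 h2
      rcases h1 with h1 | h1 | h1 | h1
      · exact h1
      · rcases h2 with h2 | h2 | h2 | h2
        · exact h2.symm
        · linarith
        · linarith [h2.1]
        · linarith [h2.1]
      · rcases h2 with h2 | h2 | h2 | h2
        · exact h2.symm
        · linarith [h1.1]
        · exact absurd h2.2 (ssubset_asymm h1.2)
        · exact absurd (h2.2.1 ▸ h1.2) (ssubset_irrefl _)
      · rcases h2 with h2 | h2 | h2 | h2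
        · exact h2.symm
        · linarith [h1.1]
        · exact absurd (h1.2.1 ▸ h2.2) (ssubset_irrefl _)
        · have hset : argminSet b = argminSet a := h1.2.1.symm
          rw [hset] at h2
          have hres : restrictVec (argminSet a)ᶜ a = restrictVec (argminSet a)ᶜ b :=
            IH _ compl_card_lt _ _ h1.2.2.2 h2.2.2.2
          funext i
          by_cases hi : i ∈ argminSet a
          · have hib : i ∈ argminSet b := h1.2.1 ▸ hi
            rw [argmin_eq_minval hi, argmin_eq_minval hib, h1.1]
          · obtain ⟨k, hk⟩ := restrictVec_surj (argminSet a)ᶜ (Finset.mem_compl.mpr hi)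
            have := congrFun hres k
            rw [restrictVec_apply, restrictVec_apply, hk] at this
            exact this

/-- `⪕` only depends on the joint relational (order) structure of the pair. -/
lemma msLE_transfer : ∀ (n : ℕ) (a b a' b' : Fin n → ℝ),
    (∀ i j, a i ≤ a j ↔ a' i ≤ a' j) →
    (∀ i j, b i ≤ b j ↔ b' i ≤ b' j) →
    (∀ i j, a i ≤ b j ↔ a' i ≤ b' j) →
    (∀ i j, b i ≤ a j ↔ b' i ≤ a' j) →
    msLE n a b → msLE n a' b' := by
  intro n
  induction n using Nat.strong_induction_on with
  | _ n IH =>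
    match n with
    | 0 => intros; rw [msLE.eq_1]; trivial
    | 1 =>
      intro a b a' b' _ _ hab _ h
      rw [msLE.eq_2] at h ⊢; exact (hab 0 0).1 h
    | m+2 =>
      intro a b a' b' Ha Hb Hab Hba h
      have hargA : argminSet a' = argminSet a := by
        ext i; simp only [mem_argminSet]; exact forall_congr' fun j => (Ha i j).symm
      have hargB : argminSet b' = argminSet b := by
        ext i; simp only [mem_argminSet]; exact forall_congr' fun j => (Hb i j).symm
      have hminle : minval a ≤ minval b ↔ minval a' ≤ minval b' := by
        rw [minval_le_minval_iff (by omega), minval_le_minval_iff (by omega)]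
        exact exists_congr fun i => forall_congr' fun j => Hab i j
      have hminle' : minval b ≤ minval a ↔ minval b' ≤ minval a' := by
        rw [minval_le_minval_iff (by omega), minval_le_minval_iff (by omega)]
        exact exists_congr fun i => forall_congr' fun j => Hba i j
      rw [msLE.eq_3] at h ⊢
      rcases h with h | h | h | h
      · left; funext i
        exact le_antisymm ((Hab i i).1 (le_of_eq (congrFun h i)))
          ((Hba i i).1 (ge_of_eq (congrFun h i)))
      · right; left
        have h1 : minval a' ≤ minval b' := hminle.1 h.le
        have h2 : ¬ minval b' ≤ minval a' := fun hc => absurd (hminle'.2 hc) (not_le.mpr h)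
        exact lt_of_le_of_ne h1 fun he => h2 he.ge
      · right; right; left
        refine ⟨le_antisymm (hminle.1 h.1.le) (hminle'.1 h.1.ge), ?_⟩
        rw [hargA, hargB]; exact h.2
      · right; right; right
        refine ⟨le_antisymm (hminle.1 h.1.le) (hminle'.1 h.1.ge), ?_, ?_, ?_⟩
        · rw [hargA, hargB]; exact h.2.1
        · rw [hargA]; exact h.2.2.1
        · rw [hargA]
          exact IH _ compl_card_lt _ _ _ _ (fun i j => Ha _ _) (fun i j => Hb _ _)
            (fun i j => Hab _ _) (fun i j => Hba _ _) h.2.2.2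

end Toolkit

section Analysis

lemma max_shift (p q : ℝ) : max (max p q - q) 0 = max (p - q) 0 := by
  rcases le_total p q with hpq | hpq
  · rw [max_eq_right hpq]
    simp [max_eq_right (sub_nonpos.mpr hpq)]
  · rw [max_eq_left hpq]

lemma mul_max_zero {c z : ℝ} (hc : 0 ≤ c) : max (c * z) 0 = c * max z 0 := by
  rw [mul_max_of_nonneg _ _ hc, mul_zero]

/-- the value of `f` at `X` from the left-linear form. -/
lemma h_at_Xs {f : ℝ → ℝ} {r xs X : ℝ} (hcont : Continuous f) (hx : xs < X)
    (hlin : ∀ y, y < X → f y = r * max (y - xs) 0) : f X = r * (X - xs) := by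
  have t1 : Filter.Tendsto f (nhdsWithin X (Set.Iio X)) (nhds (f X)) :=
    (hcont.tendsto X).mono_left nhdsWithin_le_nhds
  have t2 : Filter.Tendsto (fun y => r * max (y - xs) 0) (nhdsWithin X (Set.Iio X))
      (nhds (r * max (X - xs) 0)) :=
    (((continuous_const.mul ((continuous_id.sub continuous_const).max
      continuous_const)).tendsto X).mono_left nhdsWithin_le_nhds)
  have heq : f =ᶠ[nhdsWithin X (Set.Iio X)] (fun y => r * max (y - xs) 0) :=
    eventually_nhdsWithin_of_forall (fun y hy => hlin y hy)
  have hval := tendsto_nhds_unique (Filter.Tendsto.congr' heq t1) t2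
  rw [hval, max_eq_left (by linarith)]

end Analysis

set_option maxHeartbeats 1000000 in
/-- if each `h_i` is of the form `ρ_i (x - x*_i)⁺` in a neighbourhood
`(-∞, X*_i)` of `x*_i` (with `ρ_i > 0`, `X*_i > x*_i`), then the mapping `F` is
nondecreasing on some interval `[0, T)`, `T > 0`. -/
theorem F_locally_monotone_piecewise_linear
    (I J : ℕ) (hI : 0 < I) (hJ : 0 < J)
    (h : Fin I → ℝ → ℝ)
    (hcont : ∀ i, Continuous (h i))
    (hnonneg : ∀ i x, 0 ≤ h i x)
    (hmono : ∀ i, Monotone (h i))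
    (htop : ∀ i, Filter.Tendsto (h i) Filter.atTop Filter.atTop)
    (hzero : ∀ i, ∃ x, h i x = 0)
    (hxle : ∀ i, xstar (h i) ≤ 0)
    (G : Fin J → Finset (Fin I))
    (hGinj : Function.Injective G)
    (hGne : ∀ j, (G j).Nonempty)
    (hGcover : ∀ i, ∃ j, i ∈ G j)
    (ρ Xs : Fin I → ℝ)
    (hρ : ∀ i, 0 < ρ i)
    (hXs : ∀ i, xstar (h i) < Xs i)
    (hlin : ∀ i, ∀ x : ℝ, x < Xs i → h i x = ρ i * max (x - xstar (h i)) 0)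
    (F : ℝ → Fin I → ℝ)
    (hF : ∀ t : ℝ, 0 ≤ t → IsGreatestMS I J h G t (F t)) :
    ∃ T : ℝ, 0 < T ∧
      ∀ t t' : ℝ, 0 ≤ t → t ≤ t' → t' < T → ∀ i, F t i ≤ F t' i := by
  classical
  haveI : Nonempty (Fin I) := ⟨⟨0, hI⟩⟩
  have hXsval : ∀ k, h k (Xs k) = ρ k * (Xs k - xstar (h k)) := fun k =>
    h_at_Xs (hcont k) (hXs k) (hlin k)
  refine ⟨min (Finset.univ.inf' Finset.univ_nonempty
      (fun k => ρ k * (Xs k - xstar (h k))))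
    (min (Finset.univ.inf' Finset.univ_nonempty
      (fun p : Fin I × Fin I => if xstar (h p.1) < xstar (h p.2) then
        ρ p.1 * (xstar (h p.2) - xstar (h p.1)) else 1))
      (Finset.univ.inf' Finset.univ_nonempty
      (fun k => if ρ k < 1 ∧ xstar (h k) < 0 then
        ρ k * (-(xstar (h k))) / (1 - ρ k) else 1))), ?_, ?_⟩
  · refine lt_min (by
      apply Finset.lt_inf'_iff .. |>.mpr
      intro k _
      exact mul_pos (hρ k) (by linarith [hXs k])) (lt_min ?_ ?_)
    · apply Finset.lt_inf'_iff .. |>.mpr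
      intro p _
      split
      · next hp => exact mul_pos (hρ p.1) (by linarith)
      · norm_num
    · apply Finset.lt_inf'_iff .. |>.mpr
      intro k _
      split
      · next hk => exact div_pos (mul_pos (hρ k) (by linarith [hk.2])) (by linarith [hk.1])
      · norm_num
  intro t t' ht htt' ht'T i
  -- unpack the three bounds
  have hb1 : ∀ k, t' < ρ k * (Xs k - xstar (h k)) := by
    intro k
    exact lt_of_lt_of_le (lt_of_lt_of_le ht'T (min_le_left _ _))
      (Finset.inf'_le _ (Finset.mem_univ k))
  have hb2 : ∀ i' k, xstar (h i') < xstar (h k) → t' < ρ i' * (xstar (h k) - xstar (h i')) := by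
    intro i' k hik
    have := lt_of_lt_of_le (lt_of_lt_of_le ht'T (le_trans (min_le_right _ _) (min_le_left _ _)))
      (Finset.inf'_le _ (Finset.mem_univ (i', k)))
    simpa [hik] using this
  have hb3 : ∀ k, ρ k < 1 → xstar (h k) < 0 →
      t' < ρ k * (-(xstar (h k))) / (1 - ρ k) := by
    intro k h1 h2
    have := lt_of_lt_of_le (lt_of_lt_of_le ht'T (le_trans (min_le_right _ _) (min_le_right _ _)))
      (Finset.inf'_le _ (Finset.mem_univ k))
    simpa [h1, h2] using this
  -- facts about admissible vectors at budget s ≤ t'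
  have memfacts : ∀ s : ℝ, s ≤ t' → ∀ a ∈ admissible I J h G s, ∀ k,
      h k (a k) = ρ k * max (a k - xstar (h k)) 0 ∧
      ρ k * max (a k - xstar (h k)) 0 ≤ s ∧ a k < Xs k ∧
      a k ≤ xstar (h k) + s / ρ k := by
    intro s hst a ha k
    obtain ⟨j, hj⟩ := hGcover k
    have hk_le : h k (a k) ≤ s :=
      le_trans (Finset.single_le_sum (fun i' _ => hnonneg i' (a i')) hj) (ha.2 j)
    have hlt : a k < Xs k := by
      by_contra hge
      have h2 := hmono k (not_lt.mp hge)
      rw [hXsval k] at h2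
      have := hb1 k
      linarith
    have hform : h k (a k) = ρ k * max (a k - xstar (h k)) 0 := hlin k _ hlt
    have hbound : ρ k * max (a k - xstar (h k)) 0 ≤ s := hform ▸ hk_le
    have htube : a k ≤ xstar (h k) + s / ρ k := by
      have h1 : ρ k * (a k - xstar (h k)) ≤ s :=
        le_trans (mul_le_mul_of_nonneg_left (le_max_left _ _) (hρ k).le) hbound
      have h2 : a k - xstar (h k) ≤ s / ρ k := by
        rw [le_div_iff₀ (hρ k)]; linarith
      linarith
    exact ⟨hform, hbound, hlt, htube⟩
  -- membership builder
  have memof : ∀ s : ℝ, ∀ b : Fin I → ℝ, (∀ k, b k ≤ s) → (∀ k, b k < Xs k) →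
      (∀ j, (∑ i' ∈ G j, ρ i' * max (b i' - xstar (h i')) 0) ≤ s) →
      b ∈ admissible I J h G s := by
    intro s b h1 h2 h3
    refine ⟨h1, fun j => ?_⟩
    have : (∑ i' ∈ G j, h i' (b i')) = ∑ i' ∈ G j, ρ i' * max (b i' - xstar (h i')) 0 :=
      Finset.sum_congr rfl (fun i' _ => hlin i' _ (h2 i'))
    rw [this]; exact h3 j
  -- Pareto lower bound : x* ≤ F s
  have pareto : ∀ s : ℝ, 0 ≤ s → s ≤ t' → ∀ k, xstar (h k) ≤ F s k := by
    intro s hs0 hst k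
    have hFs := hF s hs0
    have hbmem : (fun k => max (F s k) (xstar (h k))) ∈ admissible I J h G s := by
      apply memof
      · intro k2; exact max_le (hFs.1.1 k2) (le_trans (hxle k2) hs0)
      · intro k2; exact max_lt (memfacts s hst _ hFs.1 k2).2.2.1 (hXs k2)
      · intro j
        have he : ∀ i' , ρ i' * max (max (F s i') (xstar (h i')) - xstar (h i')) 0
            = ρ i' * max (F s i' - xstar (h i')) 0 := fun i' => by rw [max_shift]
        rw [Finset.sum_congr rfl (fun i' _ => he i')]
        have h2 := hFs.1.2 j
        rw [Finset.sum_congr rfl (fun i' _ => (memfacts s hst _ hFs.1 i').1)] at h2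
        exact h2
    have h1 : msLE I _ (F s) := hFs.2 _ hbmem
    have h2 : msLE I (F s) (fun k => max (F s k) (xstar (h k))) :=
      msLE_of_le I _ _ (fun k2 => le_max_left _ _)
    have h3 := msLE_antisymm I _ _ h2 h1
    calc xstar (h k) ≤ max (F s k) (xstar (h k)) := le_max_right _ _
    _ = F s k := (congrFun h3 k).symm
  -- trivial cases
  rcases le_or_gt t' 0 with ht'0 | ht'0
  · have h1 : t = 0 := le_antisymm (le_trans htt' ht'0) ht
    have h2 : t' = 0 := le_antisymm ht'0 (le_trans ht htt')
    rw [h1, h2]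
  rcases le_or_gt t 0 with ht0 | ht0
  · have h1 : t = 0 := le_antisymm ht0 ht
    subst h1
    have hF0 : F 0 i ≤ xstar (h i) := by
      have hfacts := memfacts 0 (le_of_lt ht'0) _ (hF 0 le_rfl).1 i
      have h1 : ρ i * max (F 0 i - xstar (h i)) 0 ≤ 0 := hfacts.2.1
      have h2 : 0 ≤ ρ i * max (F 0 i - xstar (h i)) 0 :=
        mul_nonneg (hρ i).le (le_max_right _ _)
      have h3 : max (F 0 i - xstar (h i)) 0 = 0 := by
        have := le_antisymm h1 h2
        have hρi := hρ i
        rcases max_cases (F 0 i - xstar (h i)) 0 with ⟨he, _⟩ | ⟨he, _⟩ <;> nlinarith [le_max_right (F 0 i - xstar (h i)) (0:ℝ)]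
      nlinarith [le_max_left (F 0 i - xstar (h i)) (0:ℝ)]
    exact le_trans hF0 (pareto t' ht'0.le le_rfl i)
  -- main case : 0 < t ≤ t' < T
  have htne : t ≠ 0 := ne_of_gt ht0
  have ht'ne : t' ≠ 0 := ne_of_gt ht'0
  set μ : ℝ := t' / t with hμ
  set lam : ℝ := t / t' with hlam
  have hμpos : 0 < μ := div_pos ht'0 ht0
  have hμ1 : 1 ≤ μ := (one_le_div ht0).mpr htt'
  have hlampos : 0 < lam := div_pos ht0 ht'0
  have hlam1 : lam ≤ 1 := (div_le_one ht'0).mpr htt'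
  have hlamt' : lam * t' = t := div_mul_cancel₀ t ht'ne
  have hμt : μ * t = t' := div_mul_cancel₀ t' htne
  have hμlam : μ * lam = 1 := by rw [hμ, hlam]; field_simp
  have hFt := hF t ht
  have hFt' := hF t' (le_of_lt ht'0)
  have ftube : ∀ k, F t k ≤ xstar (h k) + t / ρ k := fun k =>
    (memfacts t htt' _ hFt.1 k).2.2.2
  have ftube' : ∀ k, F t' k ≤ xstar (h k) + t' / ρ k := fun k =>
    (memfacts t' le_rfl _ hFt'.1 k).2.2.2
  have fpar : ∀ k, xstar (h k) ≤ F t k := pareto t ht htt'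
  have fpar' : ∀ k, xstar (h k) ≤ F t' k := pareto t' (le_of_lt ht'0) le_rfl
  set W : Fin I → ℝ := fun k => xstar (h k) + lam * (F t' k - xstar (h k)) with hW
  set V : Fin I → ℝ := fun k => xstar (h k) + μ * (F t k - xstar (h k)) with hV
  -- sums in linear form
  have sumFt : ∀ j, (∑ i' ∈ G j, ρ i' * max (F t i' - xstar (h i')) 0) ≤ t := by
    intro j
    have h2 := hFt.1.2 j
    rwa [Finset.sum_congr rfl (fun i' _ => (memfacts t htt' _ hFt.1 i').1)] at h2
  have sumFt' : ∀ j, (∑ i' ∈ G j, ρ i' * max (F t' i' - xstar (h i')) 0) ≤ t' := by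
    intro j
    have h2 := hFt'.1.2 j
    rwa [Finset.sum_congr rfl (fun i' _ => (memfacts t' le_rfl _ hFt'.1 i').1)] at h2
  -- W ∈ A_t
  have hWsub : ∀ k, W k - xstar (h k) = lam * (F t' k - xstar (h k)) := fun k => by
    show xstar (h k) + lam * (F t' k - xstar (h k)) - xstar (h k) = _
    ring
  have hWmax : ∀ k, ρ k * max (W k - xstar (h k)) 0
      = lam * (ρ k * max (F t' k - xstar (h k)) 0) := fun k => by
    rw [hWsub k, mul_max_zero hlampos.le]; ring
  have hWmem : W ∈ admissible I J h G t := by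
    apply memof
    · intro k
      have h1 : F t' k - xstar (h k) ≤ t' - xstar (h k) := by
        have := hFt'.1.1 k; linarith
      have h2 : lam * (F t' k - xstar (h k)) ≤ lam * (t' - xstar (h k)) :=
        mul_le_mul_of_nonneg_left h1 hlampos.le
      have h3 : (1 - lam) * xstar (h k) ≤ 0 :=
        mul_nonpos_of_nonneg_of_nonpos (by linarith) (hxle k)
      have : W k = xstar (h k) + lam * (F t' k - xstar (h k)) := rfl
      nlinarith
    · intro k
      have h1 : ρ k * max (W k - xstar (h k)) 0 ≤ lam * t' := by
        rw [hWmax k]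
        exact mul_le_mul_of_nonneg_left (memfacts t' le_rfl _ hFt'.1 k).2.1 hlampos.le
      rw [hlamt'] at h1
      have h2 : ρ k * (W k - xstar (h k)) ≤ ρ k * max (W k - xstar (h k)) 0 :=
        mul_le_mul_of_nonneg_left (le_max_left _ _) (hρ k).le
      have h3 := hb1 k
      have h4 : ρ k * (W k - xstar (h k)) < ρ k * (Xs k - xstar (h k)) := by linarith
      have := (mul_lt_mul_iff_right₀ (hρ k)).mp h4
      linarith
    · intro j
      rw [Finset.sum_congr rfl (fun i' _ => hWmax i'), ← Finset.mul_sum]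
      calc lam * (∑ i' ∈ G j, ρ i' * max (F t' i' - xstar (h i')) 0) ≤ lam * t' :=
            mul_le_mul_of_nonneg_left (sumFt' j) hlampos.le
      _ = t := hlamt'
  -- V ∈ A_{t'}
  have hVsub : ∀ k, V k - xstar (h k) = μ * (F t k - xstar (h k)) := fun k => by
    show xstar (h k) + μ * (F t k - xstar (h k)) - xstar (h k) = _
    ring
  have hVmax : ∀ k, ρ k * max (V k - xstar (h k)) 0
      = μ * (ρ k * max (F t k - xstar (h k)) 0) := fun k => by
    rw [hVsub k, mul_max_zero hμpos.le]; ring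
  have hVmem : V ∈ admissible I J h G t' := by
    apply memof
    · intro k
      have hVk : V k = xstar (h k) + μ * (F t k - xstar (h k)) := rfl
      rcases eq_or_lt_of_le (hxle k) with hx0 | hx0
      · -- xstar (h k) = 0
        have h1 : F t k ≤ t := hFt.1.1 k
        rw [hVk, hx0]
        have : μ * F t k ≤ μ * t := mul_le_mul_of_nonneg_left h1 hμpos.le
        rw [hμt] at this
        simpa using this
      · -- xstar (h k) < 0
        have h1 : μ * (F t k - xstar (h k)) ≤ μ * (t / ρ k) := by
          apply mul_le_mul_of_nonneg_left _ hμpos.le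
          have := ftube k; linarith
        have h2 : μ * (t / ρ k) = t' / ρ k := by
          rw [hμ]; field_simp
        rcases le_or_gt 1 (ρ k) with hρ1 | hρ1
        · have h3 : t' / ρ k ≤ t' := div_le_self (le_of_lt ht'0) hρ1
          rw [hVk]; rw [h2] at h1; linarith
        · have h3 := hb3 k hρ1 hx0
          have h4 : t' * (1 - ρ k) < ρ k * (-(xstar (h k))) := by
            rw [lt_div_iff₀ (by linarith : (0:ℝ) < 1 - ρ k)] at h3
            linarith
          have h5 : xstar (h k) + t' / ρ k < t' := by
            have h6 : t' / ρ k < t' - xstar (h k) := by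
              rw [div_lt_iff₀ (hρ k)]
              nlinarith
            linarith
          rw [hVk]; rw [h2] at h1; linarith
    · intro k
      have h1 : ρ k * max (V k - xstar (h k)) 0 ≤ μ * t := by
        rw [hVmax k]
        exact mul_le_mul_of_nonneg_left (memfacts t htt' _ hFt.1 k).2.1 hμpos.le
      rw [hμt] at h1
      have h2 : ρ k * (V k - xstar (h k)) ≤ ρ k * max (V k - xstar (h k)) 0 :=
        mul_le_mul_of_nonneg_left (le_max_left _ _) (hρ k).le
      have h3 := hb1 k
      have h4 : ρ k * (V k - xstar (h k)) < ρ k * (Xs k - xstar (h k)) := by linarith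
      have := (mul_lt_mul_iff_right₀ (hρ k)).mp h4
      linarith
    · intro j
      rw [Finset.sum_congr rfl (fun i' _ => hVmax i'), ← Finset.mul_sum]
      calc μ * (∑ i' ∈ G j, ρ i' * max (F t i' - xstar (h i')) 0) ≤ μ * t :=
            mul_le_mul_of_nonneg_left (sumFt j) hμpos.le
      _ = t' := hμt
  -- cross-order preservation on the tube
  have cross : ∀ (z w : Fin I → ℝ),
      (∀ k, xstar (h k) ≤ z k ∧ z k ≤ xstar (h k) + t / ρ k) →
      (∀ k, xstar (h k) ≤ w k ∧ w k ≤ xstar (h k) + t / ρ k) →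
      ∀ i' k, (z i' ≤ w k ↔
        xstar (h i') + μ * (z i' - xstar (h i')) ≤ xstar (h k) + μ * (w k - xstar (h k))) := by
    intro z w hz hw i' k
    rcases lt_trichotomy (xstar (h i')) (xstar (h k)) with hlt | heq | hgt
    · apply iff_of_true
      · have h1 : t / ρ i' < xstar (h k) - xstar (h i') := by
          rw [div_lt_iff₀ (hρ i')]
          have := hb2 i' k hlt
          nlinarith
        refine le_of_lt ?_
        calc z i' ≤ xstar (h i') + t / ρ i' := (hz i').2
        _ < xstar (h k) := by linarith
        _ ≤ w k := (hw k).1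
      · have h1 : μ * (z i' - xstar (h i')) ≤ μ * (t / ρ i') :=
          mul_le_mul_of_nonneg_left (by linarith [(hz i').2]) hμpos.le
        have h2 : μ * (t / ρ i') = t' / ρ i' := by rw [hμ]; field_simp
        have h3 : t' / ρ i' < xstar (h k) - xstar (h i') := by
          rw [div_lt_iff₀ (hρ i')]
          have := hb2 i' k hlt
          nlinarith
        have h4 : 0 ≤ μ * (w k - xstar (h k)) :=
          mul_nonneg hμpos.le (by linarith [(hw k).1])
        rw [h2] at h1
        linarith
    · constructor
      · intro hle
        have h1 : μ * (z i' - xstar (h i')) ≤ μ * (w k - xstar (h k)) :=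
          mul_le_mul_of_nonneg_left (by linarith) hμpos.le
        linarith
      · intro hle
        have h1 : μ * (z i' - xstar (h i')) ≤ μ * (w k - xstar (h k)) := by linarith
        have h2 := (mul_le_mul_iff_right₀ hμpos).mp h1
        linarith
    · apply iff_of_false
      · have h1 : t / ρ k < xstar (h i') - xstar (h k) := by
          rw [div_lt_iff₀ (hρ k)]
          have := hb2 k i' hgt
          nlinarith
        apply not_le.mpr
        calc w k ≤ xstar (h k) + t / ρ k := (hw k).2
        _ < xstar (h i') := by linarith
        _ ≤ z i' := (hz i').1
      · have h1 : μ * (w k - xstar (h k)) ≤ μ * (t / ρ k) :=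
          mul_le_mul_of_nonneg_left (by linarith [(hw k).2]) hμpos.le
        have h2 : μ * (t / ρ k) = t' / ρ k := by rw [hμ]; field_simp
        have h3 : t' / ρ k < xstar (h i') - xstar (h k) := by
          rw [div_lt_iff₀ (hρ k)]
          have := hb2 k i' hgt
          nlinarith
        have h4 : 0 ≤ μ * (z i' - xstar (h i')) :=
          mul_nonneg hμpos.le (by linarith [(hz i').1])
        rw [h2] at h1
        apply not_le.mpr
        linarith
  have tubeFt : ∀ k, xstar (h k) ≤ F t k ∧ F t k ≤ xstar (h k) + t / ρ k :=
    fun k => ⟨fpar k, ftube k⟩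
  have tubeW : ∀ k, xstar (h k) ≤ W k ∧ W k ≤ xstar (h k) + t / ρ k := by
    intro k
    constructor
    · have h0 : 0 ≤ lam * (F t' k - xstar (h k)) :=
        mul_nonneg hlampos.le (by linarith [fpar' k])
      show xstar (h k) ≤ xstar (h k) + lam * (F t' k - xstar (h k))
      linarith
    · have h1 : lam * (F t' k - xstar (h k)) ≤ lam * (t' / ρ k) :=
        mul_le_mul_of_nonneg_left (by linarith [ftube' k]) hlampos.le
      have h2 : lam * (t' / ρ k) = t / ρ k := by rw [hlam]; field_simp
      show xstar (h k) + lam * (F t' k - xstar (h k)) ≤ xstar (h k) + t / ρ k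
      rw [h2] at h1
      linarith
  have hψW : (fun k => xstar (h k) + μ * (W k - xstar (h k))) = F t' := by
    funext k
    show xstar (h k) + μ * (xstar (h k) + lam * (F t' k - xstar (h k)) - xstar (h k)) = F t' k
    linear_combination (F t' k - xstar (h k)) * hμlam
  have hmsW : msLE I W (F t) := hFt.2 W hWmem
  have htrans : msLE I (fun k => xstar (h k) + μ * (W k - xstar (h k)))
      (fun k => xstar (h k) + μ * (F t k - xstar (h k))) :=
    msLE_transfer I W (F t) _ _ (fun i' j => cross W W tubeW tubeW i' j)
      (fun i' j => cross (F t) (F t) tubeFt tubeFt i' j)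
      (fun i' j => cross W (F t) tubeW tubeFt i' j)
      (fun i' j => cross (F t) W tubeFt tubeW i' j) hmsW
  rw [hψW] at htrans
  have htrans' : msLE I (F t') V := by rw [hV]; exact htrans
  have hmsV : msLE I V (F t') := hFt'.2 V hVmem
  have hVFt' : V = F t' := msLE_antisymm I V (F t') hmsV htrans'
  have h2 : 0 ≤ F t i - xstar (h i) := by linarith [fpar i]
  have h3 : F t i - xstar (h i) ≤ μ * (F t i - xstar (h i)) :=
    le_mul_of_one_le_left h2 hμ1
  calc F t i = xstar (h i) + (F t i - xstar (h i)) := by ring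
  _ ≤ xstar (h i) + μ * (F t i - xstar (h i)) := by linarith
  _ = V i := rfl
  _ = F t' i := congrFun hVFt' i
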